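/- arXiv:1606.04253 — 3 statements merged into one kernel-verified Lean document; each statement's English description precedes it below -/
import Mathlib

section
/- Let V be a finite-dimensional ℂ-vector space and φ, φ' : V × V → V bilinear maps. Suppose there exists an invertible ℂ(ε)-linear map ℱ : V(ε) → V(ε) such that for all x, y ∈ V the element ℱ⁻¹(Φ(ℱx, ℱy)) ∈ V(ε), where Φ denotes the ℂ(ε)-bilinear extension of φ, is regular at ε = 0 with value φ'(x, y). Then φ' is an algebraic degeneration of φ, i.e., φ' lies in the closure of the orbit {(x, y) ↦ g(φ(g⁻¹x, g⁻¹y)) : g ∈ GL(V)} in the space of bilinear maps on V with its canonical topology. -/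
open scoped BigOperators

/-- A rational function `f ∈ ℂ(ε)` is regular at `ε = 0` if its (reduced)
denominator does not vanish at `0`. -/
def RegAt0 (f : RatFunc ℂ) : Prop := Polynomial.eval 0 f.denom ≠ 0

/-- The value at `ε = 0` of a rational function. -/
noncomputable def evalAt0 (f : RatFunc ℂ) : ℂ :=
  Polynomial.eval 0 f.num / Polynomial.eval 0 f.denom

/-- The `GL(V)`-orbit `{(x, y) ↦ g (φ (g⁻¹ x, g⁻¹ y)) : g ∈ GL(V)}` of the
bilinear map `φ`, written in coordinates. -/
def BilOrbit {n : ℕ} (φ : Fin n → Fin n → Fin n → ℂ) :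
    Set (Fin n → Fin n → Fin n → ℂ) :=
  {S | ∃ g : GL (Fin n) ℂ,
    S = fun i j k => ∑ a, ∑ b, ∑ c,
      (↑g⁻¹ : Matrix (Fin n) (Fin n) ℂ) a i *
      (↑g⁻¹ : Matrix (Fin n) (Fin n) ℂ) b j *
      (↑g : Matrix (Fin n) (Fin n) ℂ) k c * φ a b c}

set_option linter.dupNamespace false

namespace Stmt2Aux
open Polynomial

/-- subring of rational functions regular at `t` -/
noncomputable def O (t : ℂ) : Subring (RatFunc ℂ) where
  carrier := {f | (f.denom).eval t ≠ 0}
  mul_mem' := by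
    intro a b ha hb h0
    have := eval_eq_zero_of_dvd_of_eval_eq_zero (RatFunc.denom_mul_dvd a b) h0
    rw [eval_mul] at this
    rcases mul_eq_zero.mp this with h | h
    · exact ha h
    · exact hb h
  add_mem' := by
    intro a b ha hb h0
    have := eval_eq_zero_of_dvd_of_eval_eq_zero (RatFunc.denom_add_dvd a b) h0
    rw [eval_mul] at this
    rcases mul_eq_zero.mp this with h | h
    · exact ha h
    · exact hb h
  one_mem' := by simp [RatFunc.denom_one]
  zero_mem' := by simp [RatFunc.denom_zero]
  neg_mem' := by
    intro a ha h0
    have hm1 : ((-1 : RatFunc ℂ)).denom = 1 := by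
      have : (-1 : RatFunc ℂ) = RatFunc.C (-1) := by simp
      rw [this, RatFunc.denom_C]
    have := eval_eq_zero_of_dvd_of_eval_eq_zero (RatFunc.denom_mul_dvd (-1) a) (by
      rw [show (-1 : RatFunc ℂ) * a = -a by ring]; exact h0)
    rw [eval_mul, hm1] at this
    simp at this
    exact ha this

lemma mem_O {t : ℂ} {f : RatFunc ℂ} (h : (f.denom).eval t ≠ 0) : f ∈ O t := h

lemma C_mem_O {t : ℂ} (r : ℂ) : RatFunc.C r ∈ O t := by
  show ((RatFunc.C r).denom).eval t ≠ 0
  rw [RatFunc.denom_C]; simp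

lemma denom_eval₂_ne_zero {t : ℂ} (a : O t) :
    Polynomial.eval₂ (RingHom.id ℂ) t ((a : RatFunc ℂ).denom) ≠ 0 := a.2

/-- evaluation at t as a ring hom on O t. -/
noncomputable def ev (t : ℂ) : O t →+* ℂ where
  toFun f := RatFunc.eval (RingHom.id ℂ) t f.1
  map_one' := by simp
  map_zero' := by simp
  map_mul' a b := by
    show RatFunc.eval (RingHom.id ℂ) t (((a * b : O t) : RatFunc ℂ)) = _
    rw [Subring.coe_mul]
    exact RatFunc.eval_mul (f := RingHom.id ℂ) (a := t) (denom_eval₂_ne_zero a) (denom_eval₂_ne_zero b)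
  map_add' a b := by
    show RatFunc.eval (RingHom.id ℂ) t (((a + b : O t) : RatFunc ℂ)) = _
    rw [Subring.coe_add]
    exact RatFunc.eval_add (f := RingHom.id ℂ) (a := t) (denom_eval₂_ne_zero a) (denom_eval₂_ne_zero b)

lemma ev_C (t : ℂ) (r : ℂ) : ev t ⟨RatFunc.C r, C_mem_O r⟩ = r := by
  simp [ev]

end Stmt2Aux

open Stmt2Aux Polynomial

set_option maxHeartbeats 1000000 in
set_option synthInstance.maxHeartbeats 200000 in
/-- if `ℱ` is an invertible `ℂ(ε)`-linear map on `V(ε)` such that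
`ℱ⁻¹ (Φ (ℱ x, ℱ y))` is regular at `ε = 0` with value `φ'(x, y)` for all
`x, y ∈ V` (where `Φ` is the `ℂ(ε)`-bilinear extension of `φ`), then `φ'` is an
algebraic degeneration of `φ`. -/
theorem stmt2 {n : ℕ} (φ φ' : Fin n → Fin n → Fin n → ℂ)
    (ℱ : GL (Fin n) (RatFunc ℂ))
    (h : ∀ x y : Fin n → ℂ, ∀ k : Fin n,
      RegAt0 (∑ c, (↑ℱ⁻¹ : Matrix (Fin n) (Fin n) (RatFunc ℂ)) k c *
          ∑ a, ∑ b, RatFunc.C (φ a b c) *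
            (∑ i, (↑ℱ : Matrix (Fin n) (Fin n) (RatFunc ℂ)) a i * RatFunc.C (x i)) *
            (∑ j, (↑ℱ : Matrix (Fin n) (Fin n) (RatFunc ℂ)) b j * RatFunc.C (y j))) ∧
      evalAt0 (∑ c, (↑ℱ⁻¹ : Matrix (Fin n) (Fin n) (RatFunc ℂ)) k c *
          ∑ a, ∑ b, RatFunc.C (φ a b c) *
            (∑ i, (↑ℱ : Matrix (Fin n) (Fin n) (RatFunc ℂ)) a i * RatFunc.C (x i)) *
            (∑ j, (↑ℱ : Matrix (Fin n) (Fin n) (RatFunc ℂ)) b j * RatFunc.C (y j))) =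
        ∑ i, ∑ j, φ' i j k * x i * y j) :
    φ' ∈ closure (BilOrbit φ) := by
  classical
  set A : Matrix (Fin n) (Fin n) (RatFunc ℂ) := ↑ℱ with hA
  set B : Matrix (Fin n) (Fin n) (RatFunc ℂ) := ↑ℱ⁻¹ with hB
  -- the rational functions giving the conjugated structure constants
  set G : Fin n → Fin n → Fin n → RatFunc ℂ := fun i j k =>
    ∑ c, B k c * ∑ a, ∑ b, RatFunc.C (φ a b c) * A a i * A b j with hG
  have hkey : ∀ i j k,
      (∑ c, B k c * ∑ a, ∑ b, RatFunc.C (φ a b c) *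
        (∑ l, A a l * RatFunc.C (if l = i then (1:ℂ) else 0)) *
        (∑ m, A b m * RatFunc.C (if m = j then (1:ℂ) else 0))) = G i j k := by
    intro i j k
    simp [hG, apply_ite RatFunc.C, map_one, map_zero, mul_ite, mul_one, mul_zero,
      Finset.sum_ite_eq']
  have hreg : ∀ i j k, (G i j k).denom.eval 0 ≠ 0 := by
    intro i j k
    have := (h (fun l => if l = i then (1:ℂ) else 0)
      (fun m => if m = j then (1:ℂ) else 0) k).1
    rw [RegAt0] at this
    rwa [hkey i j k] at this
  have hval : ∀ i j k, evalAt0 (G i j k) = φ' i j k := by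
    intro i j k
    have := (h (fun l => if l = i then (1:ℂ) else 0)
      (fun m => if m = j then (1:ℂ) else 0) k).2
    rw [hkey i j k] at this
    rw [this]
    simp [mul_ite, mul_one, mul_zero, Finset.sum_ite_eq']
  -- bad locus polynomial
  set P : Polynomial ℂ :=
    (∏ p : Fin n × Fin n, (A p.1 p.2).denom) *
    (∏ p : Fin n × Fin n, (B p.1 p.2).denom) *
    (∏ p : Fin n × Fin n × Fin n, (G p.1 p.2.1 p.2.2).denom) with hP
  have hPne : P ≠ 0 := by
    apply mul_ne_zero (mul_ne_zero ?_ ?_) ?_ <;>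
      exact Finset.prod_ne_zero_iff.mpr fun p _ => RatFunc.denom_ne_zero _
  set s : Set ℂ := {t | P.eval t ≠ 0} with hs
  have hdense : Dense s := by
    have hc : sᶜ = {t | P.IsRoot t} := by
      ext t; simp [hs, Polynomial.IsRoot]
    have hfin : Set.Finite sᶜ := hc ▸ Polynomial.finite_setOf_isRoot hPne
    simpa using hfin.countable.dense_compl ℂ
  -- memberships at good points
  have factor_ne : ∀ t ∈ s, ∀ m : Type, ∀ _ : Fintype m, True := fun _ _ _ _ => trivial
  have hmemA : ∀ t ∈ s, ∀ i j, A i j ∈ O t := by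
    intro t ht i j
    apply mem_O
    intro h0
    apply ht
    rw [hP]
    simp only [eval_mul, Polynomial.eval_prod]
    have : ∏ p : Fin n × Fin n, ((A p.1 p.2).denom).eval t = 0 :=
      Finset.prod_eq_zero (Finset.mem_univ (i, j)) h0
    rw [this]; ring
  have hmemB : ∀ t ∈ s, ∀ i j, B i j ∈ O t := by
    intro t ht i j
    apply mem_O
    intro h0
    apply ht
    rw [hP]
    simp only [eval_mul, Polynomial.eval_prod]
    have : ∏ p : Fin n × Fin n, ((B p.1 p.2).denom).eval t = 0 :=
      Finset.prod_eq_zero (Finset.mem_univ (i, j)) h0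
    rw [this]; ring
  have hmemG : ∀ t ∈ s, ∀ i j k, G i j k ∈ O t := by
    intro t ht i j k
    apply mem_O
    intro h0
    apply ht
    rw [hP]
    simp only [eval_mul, Polynomial.eval_prod]
    have : ∏ p : Fin n × Fin n × Fin n, ((G p.1 p.2.1 p.2.2).denom).eval t = 0 :=
      Finset.prod_eq_zero (Finset.mem_univ (i, j, k)) h0
    rw [this]; ring
  -- evaluation of the structure constants
  set u : ℂ → (Fin n → Fin n → Fin n → ℂ) :=
    fun t i j k => RatFunc.eval (RingHom.id ℂ) t (G i j k) with hu
  -- orbit membership at good points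
  have horb : ∀ t ∈ s, u t ∈ BilOrbit φ := by
    intro t ht
    set Atil : Matrix (Fin n) (Fin n) (O t) := fun i j => ⟨A i j, hmemA t ht i j⟩ with hAtil
    set Btil : Matrix (Fin n) (Fin n) (O t) := fun i j => ⟨B i j, hmemB t ht i j⟩ with hBtil
    have hAB : A * B = 1 := by
      rw [hA, hB]
      exact_mod_cast Units.mul_inv ℱ
    have hBA : B * A = 1 := by
      rw [hA, hB]
      exact_mod_cast Units.inv_mul ℱ
    have hABt : Atil * Btil = 1 := by
      ext i j
      have : ((Atil * Btil) i j : RatFunc ℂ) = (A * B) i j := by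
        rw [Matrix.mul_apply, Matrix.mul_apply]; simp [hAtil, hBtil]
      rw [hAB] at this
      rw [this]
      by_cases hij : i = j <;> simp [Matrix.one_apply, hij]
    have hBAt : Btil * Atil = 1 := by
      ext i j
      have : ((Btil * Atil) i j : RatFunc ℂ) = (B * A) i j := by
        rw [Matrix.mul_apply, Matrix.mul_apply]; simp [hAtil, hBtil]
      rw [hBA] at this
      rw [this]
      by_cases hij : i = j <;> simp [Matrix.one_apply, hij]
    set At : Matrix (Fin n) (Fin n) ℂ := (ev t).mapMatrix Atil with hAt
    set Bt : Matrix (Fin n) (Fin n) ℂ := (ev t).mapMatrix Btil with hBt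
    refine ⟨⟨Bt, At, ?_, ?_⟩, ?_⟩
    · rw [hAt, hBt, ← map_mul, hBAt, map_one]
    · rw [hAt, hBt, ← map_mul, hABt, map_one]
    · funext i j k
      show u t i j k = _
      have hcoe : (⟨G i j k, hmemG t ht i j k⟩ : O t) =
          ∑ c, Btil k c * ∑ a, ∑ b,
            (⟨RatFunc.C (φ a b c), C_mem_O _⟩ : O t) * Atil a i * Atil b j := by
        apply Subtype.ext
        push_cast
        rw [hG]
      have : u t i j k = ev t ⟨G i j k, hmemG t ht i j k⟩ := rfl
      rw [this, hcoe]
      simp only [map_sum, map_mul, ev_C, hAt, hBt, Units.inv_mk, Units.val_mk,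
        RingHom.mapMatrix_apply, Matrix.map_apply]
      simp only [Finset.mul_sum]
      rw [Finset.sum_comm]
      refine Finset.sum_congr rfl fun a _ => ?_
      rw [Finset.sum_comm]
      refine Finset.sum_congr rfl fun b _ => ?_
      refine Finset.sum_congr rfl fun c _ => ?_
      ring
  -- the limit
  have htend : Filter.Tendsto u (nhdsWithin 0 s) (nhds φ') := by
    apply Filter.Tendsto.mono_left _ nhdsWithin_le_nhds
    rw [tendsto_pi_nhds]
    intro i
    rw [tendsto_pi_nhds]
    intro j
    rw [tendsto_pi_nhds]
    intro k
    have hcont : Filter.Tendsto (fun t : ℂ => ((G i j k).num.eval t) / ((G i j k).denom.eval t))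
        (nhds 0) (nhds (((G i j k).num.eval 0) / ((G i j k).denom.eval 0))) := by
      exact Filter.Tendsto.div ((G i j k).num.toContinuousMap.continuous.tendsto 0)
        ((G i j k).denom.toContinuousMap.continuous.tendsto 0) (hreg i j k)
    have : ((G i j k).num.eval 0) / ((G i j k).denom.eval 0) = φ' i j k := hval i j k
    rw [this] at hcont
    exact hcont
  have hne : (nhdsWithin (0:ℂ) s).NeBot := by
    rw [← mem_closure_iff_nhdsWithin_neBot]
    rw [hdense.closure_eq]
    trivial
  exact mem_closure_of_tendsto htend
    (Filter.eventually_iff_exists_mem.mpr ⟨s, self_mem_nhdsWithin, horb⟩)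
end

section
/- Let U, V, W be finite-dimensional ℂ-vector spaces with dim U = n, and let T : U → V ⊗ W be an injective linear map. Then for every d with 0 ≤ d ≤ n, bR(T) ≥ n − d + min{ bR(T|_{U'}) : U' ⊆ U a subspace with dim U' = d }, where T|_{U'} : U' → V ⊗ W denotes the restriction of T to U'. -/
open scoped BigOperators

/-- `T` (viewed as a linear map `ℂⁿ → ℂᵖ ⊗ ℂᵐ`) is a sum of `r` maps of the
form `u ↦ f(u) v ⊗ w`, i.e. has rank at most `r`. -/
def rankLE {n p m : ℕ} (T : Fin n → Fin p → Fin m → ℂ) (r : ℕ) : Prop :=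
  ∃ f : Fin r → Fin n → ℂ, ∃ v : Fin r → Fin p → ℂ, ∃ w : Fin r → Fin m → ℂ,
    T = fun i j k => ∑ s, f s i * v s j * w s k

/-- The border rank: the least `r` such that `T` is a limit of maps of rank at
most `r`. -/
noncomputable def bRank {n p m : ℕ} (T : Fin n → Fin p → Fin m → ℂ) : ℕ :=
  sInf {r | T ∈ closure {S | rankLE S r}}

lemma rankLE_self {n p m : ℕ} (T : Fin n → Fin p → Fin m → ℂ) : rankLE T (n * p) := by
  refine ⟨fun s i => if i = (finProdFinEquiv.symm s).1 then 1 else 0,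
    fun s j => if j = (finProdFinEquiv.symm s).2 then 1 else 0,
    fun s k => T (finProdFinEquiv.symm s).1 (finProdFinEquiv.symm s).2 k, ?_⟩
  funext i j k
  rw [← finProdFinEquiv.sum_comp (M := ℂ)]
  simp [Fintype.sum_prod_type, ite_and, mul_assoc]

lemma bRank_spec {n p m : ℕ} (T : Fin n → Fin p → Fin m → ℂ) :
    T ∈ closure {S | rankLE S (bRank T)} :=
  Nat.sInf_mem (s := {r | T ∈ closure {S | rankLE S r}})
    ⟨n * p, subset_closure (s := {S | rankLE S (n * p)}) (rankLE_self T)⟩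

open Module in
lemma n_le_of_mem_closure {n p m r : ℕ} {T : Fin n → Fin p → Fin m → ℂ}
    (hT : Function.Injective
      (fun x : Fin n → ℂ => fun j k => ∑ i, T i j k * x i))
    (h : T ∈ closure {S | rankLE S r}) : n ≤ r := by
  classical
  set A : (Fin n → Fin p → Fin m → ℂ) → Matrix (Fin p × Fin m) (Fin n) ℂ :=
    fun S => Matrix.of (fun jk i => S i jk.1 jk.2) with hA
  have hker : LinearMap.ker (A T).mulVecLin = ⊥ := by
    rw [Matrix.ker_mulVecLin_eq_bot_iff]
    intro v hv
    apply hT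
    funext j k
    have h1 := congrFun hv (j, k)
    simp only [Matrix.mulVec, dotProduct, hA, Matrix.of_apply, Pi.zero_apply] at h1
    simpa using h1
  obtain ⟨g, hg⟩ := LinearMap.exists_leftInverse_of_injective _ hker
  set G : Matrix (Fin n) (Fin p × Fin m) ℂ := LinearMap.toMatrix' g with hGdef
  have hG : G * A T = 1 := by
    apply LinearMap.toMatrix'.symm.injective
    show Matrix.toLin' (G * A T) = Matrix.toLin' 1
    rw [Matrix.toLin'_apply', Matrix.toLin'_apply', Matrix.mulVecLin_mul,
      Matrix.mulVecLin_one, ← Matrix.toLin'_apply' G, hGdef, Matrix.toLin'_toMatrix']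
    exact hg
  have contA : Continuous A := by
    apply continuous_pi; intro jk; apply continuous_pi; intro i
    exact (continuous_apply jk.2).comp ((continuous_apply jk.1).comp (continuous_apply i))
  have contdet : Continuous fun S => (G * A S).det :=
    (continuous_const.matrix_mul contA).matrix_det
  have hopen : IsOpen {S : Fin n → Fin p → Fin m → ℂ | (G * A S).det ≠ 0} :=
    isOpen_compl_singleton.preimage contdet
  have hTO : T ∈ {S : Fin n → Fin p → Fin m → ℂ | (G * A S).det ≠ 0} := by
    simp [hG]
  obtain ⟨S, hSO, hSr⟩ := (_root_.mem_closure_iff.mp h) _ hopen hTO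
  obtain ⟨f, v, w, hSeq⟩ := hSr
  set M := G * A S with hM
  have hMunit : IsUnit M.det := isUnit_iff_ne_zero.mpr hSO
  set g' : Fin r → (Fin n → ℂ) := fun s => G.mulVec (fun jk => v s jk.1 * w s jk.2) with hg'
  have hspan : Submodule.span ℂ (Set.range g') = ⊤ := by
    rw [Submodule.eq_top_iff']
    intro y
    set x := M⁻¹.mulVec y with hx
    have hy : y = M.mulVec x := by
      rw [hx, Matrix.mulVec_mulVec, Matrix.mul_nonsing_inv _ hMunit, Matrix.one_mulVec]
    have hAS : (A S).mulVec x = ∑ s, (∑ i, f s i * x i) • (fun jk : Fin p × Fin m => v s jk.1 * w s jk.2) := by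
      funext jk
      simp only [Matrix.mulVec, dotProduct, hA, Matrix.of_apply, hSeq,
        Finset.sum_apply, Pi.smul_apply, smul_eq_mul, Finset.sum_mul]
      rw [Finset.sum_comm]
      apply Finset.sum_congr rfl
      intro s _
      apply Finset.sum_congr rfl
      intro i _
      ring
    have : M.mulVec x = ∑ s, (∑ i, f s i * x i) • g' s := by
      rw [hM, ← Matrix.mulVec_mulVec, hAS]
      show G.mulVecLin _ = _
      rw [map_sum]
      simp only [map_smul]
      rfl
    rw [hy, this]
    exact Submodule.sum_mem _ fun s _ => Submodule.smul_mem _ _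
      (Submodule.subset_span (Set.mem_range_self s))
  set B : Matrix (Fin n) (Fin r) ℂ := Matrix.of (fun i s => g' s i) with hB
  have hrange : LinearMap.range B.mulVecLin = ⊤ := by
    rw [Matrix.range_mulVecLin]
    convert hspan using 3
    · rfl
    · funext s i; rfl
  calc n = finrank ℂ (Fin n → ℂ) := (Module.finrank_fin_fun ℂ).symm
    _ = finrank ℂ (LinearMap.range B.mulVecLin) := by rw [hrange, finrank_top]
    _ ≤ finrank ℂ (Fin r → ℂ) := LinearMap.finrank_range_le _
    _ = r := Module.finrank_fin_fun ℂ

open Module Matrix in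
lemma exists_orthonormal_kernel {q n d : ℕ} (hd : d + q ≤ n) (F : Matrix (Fin q) (Fin n) ℂ) :
    ∃ P : Fin n → Fin d → ℂ,
      (Matrix.of P)ᴴ * Matrix.of P = 1 ∧ ∀ a, F.mulVec (fun i => P i a) = 0 := by
  classical
  let E : EuclideanSpace ℂ (Fin n) ≃ₗ[ℂ] (Fin n → ℂ) := WithLp.linearEquiv 2 ℂ (Fin n → ℂ)
  let L : EuclideanSpace ℂ (Fin n) →ₗ[ℂ] (Fin q → ℂ) := F.mulVecLin ∘ₗ E.toLinearMap
  have hdim : d ≤ finrank ℂ (LinearMap.ker L) := by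
    have h1 := LinearMap.finrank_range_add_finrank_ker L
    rw [finrank_euclideanSpace_fin] at h1
    have h2 : finrank ℂ (LinearMap.range L) ≤ q := by
      simpa [Module.finrank_fin_fun] using Submodule.finrank_le (LinearMap.range L)
    omega
  let b := stdOrthonormalBasis ℂ (LinearMap.ker L)
  refine ⟨fun i a => ((b ⟨a.1, lt_of_lt_of_le a.2 hdim⟩ : LinearMap.ker L)
      : EuclideanSpace ℂ (Fin n)) i, ?_, ?_⟩
  · ext a c
    have horth := orthonormal_iff_ite.mp b.orthonormal
      ⟨a.1, lt_of_lt_of_le a.2 hdim⟩ ⟨c.1, lt_of_lt_of_le c.2 hdim⟩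
    rw [Submodule.coe_inner, PiLp.inner_apply] at horth
    simp only [RCLike.inner_apply] at horth
    simp only [Matrix.mul_apply, Matrix.conjTranspose_apply, Matrix.of_apply, Matrix.one_apply]
    simp only [starRingEnd_apply] at horth
    simp only [mul_comm (star (_ : ℂ))]
    rw [horth]
    simp [Fin.mk_eq_mk, Fin.val_inj]
  · intro a
    exact (b ⟨a.1, lt_of_lt_of_le a.2 hdim⟩).2

open Module Matrix Filter in
lemma exists_P {n p m r : ℕ} (d : ℕ) (hd : d ≤ n) (hq : n - d ≤ r)
    {T : Fin n → Fin p → Fin m → ℂ}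
    (h : T ∈ closure {S | rankLE S r}) :
    ∃ P : Matrix (Fin n) (Fin d) ℂ, Function.Injective P.mulVecLin ∧
      (fun a j k => ∑ i, T i j k * P i a) ∈ closure {S | rankLE S (r - (n - d))} := by
  classical
  obtain ⟨u, hu, hulim⟩ := mem_closure_iff_seq_limit.mp h
  choose f v w huvw using hu
  have hr : (n - d) + (r - (n - d)) = r := by omega
  have hdq : d + (n - d) ≤ n := by omega
  have hP := fun t => exists_orthonormal_kernel hdq
    (Matrix.of (fun e i => f t (finCongr hr (Fin.castAdd (r - (n - d)) e)) i))
  choose P hortho hcol using hP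
  set O : Set (Fin n → Fin d → ℂ) := {Q | (Matrix.of Q)ᴴ * Matrix.of Q = 1} with hOdef
  have hOclosed : IsClosed O := by
    have hc : Continuous fun Q : Fin n → Fin d → ℂ => (Matrix.of Q)ᴴ * Matrix.of Q :=
      Continuous.matrix_mul (Continuous.matrix_conjTranspose continuous_id) continuous_id
    exact isClosed_singleton.preimage hc
  have hOsub : O ⊆ Metric.closedBall 0 1 := by
    intro Q hQ
    have hdiag : ∀ a : Fin d, ∑ i, Complex.normSq (Q i a) = 1 := by
      intro a
      have h1 := congrFun (congrFun hQ a) a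
      simp only [Matrix.mul_apply, Matrix.conjTranspose_apply, Matrix.of_apply,
        Matrix.one_apply_eq] at h1
      have h2 : ∀ i : Fin n, star (Q i a) * Q i a = (Complex.normSq (Q i a) : ℂ) := by
        intro i
        rw [mul_comm, ← Complex.mul_conj]
        rfl
      rw [Finset.sum_congr rfl (fun i _ => h2 i)] at h1
      exact_mod_cast h1
    rw [Metric.mem_closedBall, dist_pi_le_iff zero_le_one]
    intro i
    rw [dist_pi_le_iff zero_le_one]
    intro a
    simp only [Pi.zero_apply, dist_zero_right]
    have h3 : Complex.normSq (Q i a) ≤ 1 := by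
      rw [← hdiag a]
      exact Finset.single_le_sum (f := fun i => Complex.normSq (Q i a))
        (fun i _ => Complex.normSq_nonneg _) (Finset.mem_univ i)
    nlinarith [Complex.sq_norm (Q i a), norm_nonneg (Q i a)]
  have hOcompact : IsCompact O :=
    Metric.isCompact_of_isClosed_isBounded hOclosed
      (Metric.isBounded_closedBall.subset hOsub)
  obtain ⟨Pl, hPlO, φ, hφ, hPlim⟩ := hOcompact.tendsto_subseq (fun t => hortho t)
  have hinj : Function.Injective (Matrix.of Pl).mulVecLin := by
    have h1 : (Matrix.of Pl)ᴴ * Matrix.of Pl = 1 := hPlO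
    have hlv : ∀ z : Fin d → ℂ, (Matrix.of Pl)ᴴ.mulVec ((Matrix.of Pl).mulVec z) = z := by
      intro z; rw [Matrix.mulVec_mulVec, h1, Matrix.one_mulVec]
    intro x y hxy
    calc x = (Matrix.of Pl)ᴴ.mulVec ((Matrix.of Pl).mulVec x) := (hlv x).symm
      _ = (Matrix.of Pl)ᴴ.mulVec ((Matrix.of Pl).mulVec y) := by
          rw [show (Matrix.of Pl).mulVec x = (Matrix.of Pl).mulVec y from hxy]
      _ = y := hlv y
  have hulim' : Tendsto (fun t => u (φ t)) atTop (nhds T) := hulim.comp hφ.tendsto_atTop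
  set C : ℕ → (Fin d → Fin p → Fin m → ℂ) :=
    fun t a j k => ∑ i, u (φ t) i j k * P (φ t) i a with hC
  have hClim : Tendsto C atTop (nhds (fun a j k => ∑ i, T i j k * Pl i a)) := by
    rw [tendsto_pi_nhds]; intro a
    rw [tendsto_pi_nhds]; intro j
    rw [tendsto_pi_nhds]; intro k
    apply tendsto_finset_sum
    intro i _
    apply Filter.Tendsto.mul
    · have s1 : Tendsto (fun t => u (φ t) i) atTop (nhds (T i)) :=
        ((continuous_apply i).tendsto T).comp hulim'
      have s2 : Tendsto (fun t => u (φ t) i j) atTop (nhds (T i j)) :=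
        ((continuous_apply j).tendsto (T i)).comp s1
      exact ((continuous_apply k).tendsto (T i j)).comp s2
    · have s1 : Tendsto (fun t => P (φ t) i) atTop (nhds (Pl i)) :=
        ((continuous_apply i).tendsto Pl).comp hPlim
      exact ((continuous_apply a).tendsto (Pl i)).comp s1
  have hCrank : ∀ t, rankLE (C t) (r - (n - d)) := by
    intro t
    refine ⟨fun s' a => ∑ i, f (φ t) (finCongr hr (Fin.natAdd (n - d) s')) i * P (φ t) i a,
      fun s' => v (φ t) (finCongr hr (Fin.natAdd (n - d) s')),
      fun s' => w (φ t) (finCongr hr (Fin.natAdd (n - d) s')), ?_⟩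
    funext a j k
    show ∑ i, u (φ t) i j k * P (φ t) i a = _
    have key : ∀ i : Fin n,
        u (φ t) i j k * P (φ t) i a
          = ∑ s, (f (φ t) s i * P (φ t) i a) * (v (φ t) s j * w (φ t) s k) := by
      intro i
      rw [huvw (φ t)]
      rw [Finset.sum_mul]
      apply Finset.sum_congr rfl
      intros; ring
    calc ∑ i, u (φ t) i j k * P (φ t) i a
        = ∑ s : Fin r, (∑ i, f (φ t) s i * P (φ t) i a) * (v (φ t) s j * w (φ t) s k) := by
          simp only [key]
          rw [Finset.sum_comm]
          simp [Finset.mul_sum, Finset.sum_mul]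
      _ = ∑ s : Fin ((n - d) + (r - (n - d))), (∑ i, f (φ t) (finCongr hr s) i * P (φ t) i a)
            * (v (φ t) (finCongr hr s) j * w (φ t) (finCongr hr s) k) :=
          (Fintype.sum_equiv (finCongr hr) _ _ (fun s => rfl)).symm
      _ = ∑ s' : Fin (r - (n - d)),
            (∑ i, f (φ t) (finCongr hr (Fin.natAdd (n - d) s')) i * P (φ t) i a)
            * (v (φ t) (finCongr hr (Fin.natAdd (n - d) s')) j
              * w (φ t) (finCongr hr (Fin.natAdd (n - d) s')) k) := by
          have hzero : ∀ e : Fin (n - d),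
              (∑ i, f (φ t) (Fin.cast hr (Fin.castAdd (r - (n - d)) e)) i * P (φ t) i a) = 0 := by
            intro e
            have h4 := congrFun (hcol (φ t) a) e
            simpa [Matrix.mulVec, dotProduct, finCongr_apply] using h4
          simp only [finCongr_apply]
          rw [Fin.sum_univ_add]
          simp [hzero]
      _ = _ := by
          apply Finset.sum_congr rfl
          intros; ring
  exact ⟨Matrix.of Pl, hinj,
    mem_closure_of_tendsto hClim (Filter.Eventually.of_forall fun t => hCrank t)⟩

/-- for an injective linear map `T : U → V ⊗ W` with `dim U = n`
and any `0 ≤ d ≤ n`,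
`bR(T) ≥ n − d + min { bR(T|_{U'}) : U' ⊆ U, dim U' = d }`,
where `d`-dimensional subspaces `U' ⊆ U` are parameterized by injective linear
maps `P : ℂᵈ → U`. -/
theorem stmt9 {n p m : ℕ} (d : ℕ) (hd : d ≤ n) (T : Fin n → Fin p → Fin m → ℂ)
    (hT : Function.Injective
      (fun x : Fin n → ℂ => fun j k => ∑ i, T i j k * x i)) :
    n - d + sInf {r | ∃ P : Matrix (Fin n) (Fin d) ℂ,
        Function.Injective P.mulVecLin ∧
        r = bRank (fun a j k => ∑ i, T i j k * P i a)} ≤ bRank T := by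
  have hmem := bRank_spec T
  have hnr : n ≤ bRank T := n_le_of_mem_closure hT hmem
  have hq : n - d ≤ bRank T := le_trans (Nat.sub_le n d) hnr
  obtain ⟨P, hPinj, hPcl⟩ := exists_P d hd hq hmem
  have h1 : bRank (fun a j k => ∑ i, T i j k * P i a) ≤ bRank T - (n - d) :=
    Nat.sInf_le hPcl
  have h2 : sInf {r | ∃ P : Matrix (Fin n) (Fin d) ℂ,
        Function.Injective P.mulVecLin ∧
        r = bRank (fun a j k => ∑ i, T i j k * P i a)}
      ≤ bRank (fun a j k => ∑ i, T i j k * P i a) :=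
    Nat.sInf_le ⟨P, hPinj, rfl⟩
  exact le_trans (Nat.add_le_add_left (le_trans h2 h1) (n - d))
    (le_of_eq (Nat.add_sub_cancel' hq))
end

section
/- Let U, V, W be finite-dimensional ℂ-vector spaces with dim U = n ≥ 1, and let T : U → V ⊗ W be an injective linear map. Then bR(T) ≥ n − 1 + m(T), where m(T) = min over nonzero u ∈ U of rk(Tu). -/
open scoped BigOperators

/-- A 2-tensor (matrix) is a sum of `r` decomposable tensors. -/
def mrankLE {p m : ℕ} (M : Fin p → Fin m → ℂ) (r : ℕ) : Prop :=
  ∃ v : Fin r → Fin p → ℂ, ∃ w : Fin r → Fin m → ℂ,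
    M = fun j k => ∑ s, v s j * w s k

/-- The rank of a 2-tensor: the least `r` such that it is a sum of `r`
decomposable tensors. -/
noncomputable def mrank {p m : ℕ} (M : Fin p → Fin m → ℂ) : ℕ :=
  sInf {r | mrankLE M r}

/-! ### Auxiliary lemmas -/

lemma sum_fin_dite {β : Type*} [AddCommMonoid β] {k l : ℕ} (hkl : k ≤ l) (g : Fin k → β) :
    (∑ s : Fin l, if h : (s : ℕ) < k then g ⟨s, h⟩ else 0) = ∑ s : Fin k, g s := by
  have h1 : (∑ s : Fin l, if h : (s : ℕ) < k then g ⟨s, h⟩ else 0)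
      = ∑ s ∈ Finset.range l, (if h : s < k then g ⟨s, h⟩ else 0) :=
    Fin.sum_univ_eq_sum_range (fun s => if h : s < k then g ⟨s, h⟩ else 0) l
  have h2 : (∑ s : Fin k, g s)
      = ∑ s ∈ Finset.range k, (if h : s < k then g ⟨s, h⟩ else 0) := by
    rw [← Fin.sum_univ_eq_sum_range (fun s => if h : s < k then g ⟨s, h⟩ else 0) k]
    exact Finset.sum_congr rfl (fun s _ => by rw [dif_pos s.isLt])
  rw [h1, h2]
  exact (Finset.sum_subset (Finset.range_subset_range.mpr hkl)
    (fun x _ hx => dif_neg (by simpa using hx))).symm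

lemma mrankLE_mono {p m : ℕ} {M : Fin p → Fin m → ℂ} {k l : ℕ} (h : mrankLE M k)
    (hkl : k ≤ l) : mrankLE M l := by
  obtain ⟨v, w, rfl⟩ := h
  refine ⟨fun s j => if h : (s : ℕ) < k then v ⟨s, h⟩ j else 0,
    fun s k' => if h : (s : ℕ) < k then w ⟨s, h⟩ k' else 0, ?_⟩
  funext j k'
  have := sum_fin_dite (β := ℂ) hkl (fun s => v s j * w s k')
  rw [← this]
  congr 1; funext s
  by_cases h : (s : ℕ) < k <;> simp [h]

/-- rank ≤ k of a p×m matrix iff all "sandwiched" determinants vanish. -/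
lemma rank_le_iff_det {p m k : ℕ} (A : Matrix (Fin p) (Fin m) ℂ) :
    A.rank ≤ k ↔ ∀ (L : Matrix (Fin (k+1)) (Fin p) ℂ) (R : Matrix (Fin m) (Fin (k+1)) ℂ),
      (L * A * R).det = 0 := by
  constructor
  · intro hA L R
    by_contra hdet
    have hunit : IsUnit (L * A * R) :=
      (Matrix.isUnit_iff_isUnit_det _).mpr (isUnit_iff_ne_zero.mpr hdet)
    have h1 : (L * A * R).rank = k + 1 := by
      rw [Matrix.rank_of_isUnit _ hunit, Fintype.card_fin]
    have h2 : (L * A * R).rank ≤ A.rank :=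
      le_trans (Matrix.rank_mul_le_left (L * A) R)
        (Matrix.rank_mul_le_right L A)
    omega
  · intro hdet
    by_contra hA
    push_neg at hA
    set W := LinearMap.range A.mulVecLin with hW
    have hfin : k + 1 ≤ Module.finrank ℂ W := hA
    set d := Module.finrank ℂ W with hd
    have b : Module.Basis (Fin d) ℂ W := Module.finBasis ℂ W
    have hy : ∀ i : Fin (k+1), ∃ x : Fin m → ℂ,
        A.mulVec x = (b (Fin.castLE hfin i) : Fin p → ℂ) := by
      intro i
      obtain ⟨x, hx⟩ := (b (Fin.castLE hfin i)).2
      exact ⟨x, hx⟩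
    choose x hx using hy
    set R := Matrix.of (fun (a : Fin m) (i : Fin (k+1)) => x i a) with hR
    set N := A * R with hN
    have hNcol : ∀ j i, N j i = (b (Fin.castLE hfin i) : Fin p → ℂ) j := by
      intro j i
      rw [hN, Matrix.mul_apply]
      rw [← hx i]
      simp [Matrix.mulVec, dotProduct, hR]
    have hli : LinearIndependent ℂ
        (fun i : Fin (k+1) => (b (Fin.castLE hfin i) : Fin p → ℂ)) := by
      have h1 : LinearIndependent ℂ (fun i : Fin d => (b i : Fin p → ℂ)) :=
        b.linearIndependent.map' W.subtype W.ker_subtype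
      exact h1.comp (Fin.castLE hfin) (Fin.castLE_injective hfin)
    have hinj : Function.Injective N.mulVecLin := by
      rw [← LinearMap.ker_eq_bot]
      rw [LinearMap.ker_eq_bot']
      intro c hc
      have hsum : ∑ i, c i • (fun j => N j i) = (0 : Fin p → ℂ) := by
        funext j
        have := congrFun hc j
        simpa [Matrix.mulVecLin, Matrix.mulVec, dotProduct, Finset.sum_apply,
          mul_comm] using this
      have hzero : ∑ i, c i • ((b (Fin.castLE hfin i) : Fin p → ℂ)) = 0 := by
        rw [← hsum]
        exact Finset.sum_congr rfl fun i _ => by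
          congr 1; funext j; exact (hNcol j i).symm
      have := Fintype.linearIndependent_iff.mp hli c hzero
      funext i; exact this i
    obtain ⟨g, hg⟩ := N.mulVecLin.exists_leftInverse_of_injective (LinearMap.ker_eq_bot.mpr hinj)
    set L := LinearMap.toMatrix' g with hL
    have hLN : L * N = 1 := by
      have : LinearMap.toMatrix' (g ∘ₗ N.mulVecLin)
          = LinearMap.toMatrix' (LinearMap.id (R := ℂ) (M := Fin (k+1) → ℂ)) := by
        rw [hg]
      rw [LinearMap.toMatrix'_comp, ← Matrix.toLin'_apply'] at this
      rw [LinearMap.toMatrix'_toLin'] at this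
      rw [LinearMap.toMatrix'_id] at this
      rw [hL, this]
    have := hdet L R
    rw [Matrix.mul_assoc, ← hN, hLN] at this
    simp at this

lemma mrankLE_iff_rank_le {p m k : ℕ} {M : Fin p → Fin m → ℂ} :
    mrankLE M k ↔ (Matrix.of M).rank ≤ k := by
  constructor
  · rintro ⟨v, w, rfl⟩
    have : (Matrix.of fun j k' => ∑ s : Fin k, v s j * w s k')
        = Matrix.of (fun j (s : Fin k) => v s j) * Matrix.of (fun (s : Fin k) k' => w s k') := by
      funext j k'
      simp [Matrix.mul_apply]
    rw [this]
    exact le_trans (Matrix.rank_mul_le_right _ _)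
      (le_trans (Matrix.rank_le_card_height _) (by simp))
  · intro h
    set A := Matrix.of M with hA
    set W := LinearMap.range A.mulVecLin with hW
    set d := Module.finrank ℂ W with hd
    have hdk : d ≤ k := h
    have b : Module.Basis (Fin d) ℂ W := Module.finBasis ℂ W
    have hcol : ∀ k' : Fin m, (fun j => M j k') ∈ W := by
      intro k'
      refine ⟨Pi.single k' 1, ?_⟩
      funext j
      simp [Matrix.mulVecLin, Matrix.mulVec_single, hA]
    have key : mrankLE M d := by
      refine ⟨fun s j => (b s : Fin p → ℂ) j,
        fun s k' => b.repr ⟨fun j => M j k', hcol k'⟩ s, ?_⟩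
      funext j k'
      have := b.sum_repr ⟨fun j => M j k', hcol k'⟩
      have h2 := congrArg (fun (z : W) => (z : Fin p → ℂ) j) this
      simp only [AddSubmonoidClass.coe_finset_sum, Finset.sum_apply, SetLike.val_smul,
        Pi.smul_apply, smul_eq_mul] at h2
      rw [← h2]
      exact Finset.sum_congr rfl fun s _ => mul_comm _ _
    exact mrankLE_mono key hdk

lemma isClosed_mrankLE (p m k : ℕ) : IsClosed {M : Fin p → Fin m → ℂ | mrankLE M k} := by
  have hset : {M : Fin p → Fin m → ℂ | mrankLE M k}
      = ⋂ (L : Matrix (Fin (k+1)) (Fin p) ℂ), ⋂ (R : Matrix (Fin m) (Fin (k+1)) ℂ),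
          {M : Fin p → Fin m → ℂ | (L * Matrix.of M * R).det = 0} := by
    ext M
    simp only [Set.mem_setOf_eq, Set.mem_iInter, mrankLE_iff_rank_le, rank_le_iff_det]
  rw [hset]
  refine isClosed_iInter fun L => isClosed_iInter fun R => ?_
  refine isClosed_eq ?_ continuous_const
  have hof : Continuous fun M : Fin p → Fin m → ℂ => Matrix.of M := continuous_id
  exact ((continuous_const.matrix_mul hof).matrix_mul continuous_const).matrix_det

lemma rankLE_full {n p m : ℕ} (T : Fin n → Fin p → Fin m → ℂ) : rankLE T (n*(p*m)) := by
  have e : Fin n × (Fin p × Fin m) ≃ Fin (n*(p*m)) :=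
    (Equiv.prodCongr (Equiv.refl _) finProdFinEquiv).trans finProdFinEquiv
  refine ⟨fun s i => if (e.symm s).1 = i then T (e.symm s).1 (e.symm s).2.1 (e.symm s).2.2 else 0,
    fun s j => if (e.symm s).2.1 = j then 1 else 0,
    fun s k => if (e.symm s).2.2 = k then 1 else 0, ?_⟩
  funext i j k
  rw [Equiv.sum_comp e.symm (fun t : Fin n × (Fin p × Fin m) =>
    (if t.1 = i then T t.1 t.2.1 t.2.2 else 0) * (if t.2.1 = j then 1 else 0) *
      (if t.2.2 = k then 1 else 0))]
  simp [Fintype.sum_prod_type, Finset.sum_ite_eq, Finset.sum_ite_eq', ite_mul, mul_ite,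
    mul_one, mul_zero, zero_mul]

/-- for an injective linear map `T : U → V ⊗ W` with
`dim U = n ≥ 1`, `bR(T) ≥ n − 1 + m(T)`, where
`m(T) = min { rk(Tu) : 0 ≠ u ∈ U }`. -/
theorem stmt10 {n p m : ℕ} (hn : 1 ≤ n) (T : Fin n → Fin p → Fin m → ℂ)
    (hT : Function.Injective
      (fun x : Fin n → ℂ => fun j k => ∑ i, T i j k * x i)) :
    n - 1 + sInf {r | ∃ u : Fin n → ℂ, u ≠ 0 ∧
        r = mrank (fun j k => ∑ i, T i j k * u i)} ≤ bRank T := by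
  have hne : Set.Nonempty {r' | T ∈ closure {S | rankLE S r'}} :=
    ⟨n*(p*m), subset_closure (rankLE_full T)⟩
  have hmem : T ∈ closure {S | rankLE S (bRank T)} := Nat.sInf_mem hne
  set r := bRank T with hrdef
  obtain ⟨S, hS, hSlim⟩ := mem_closure_iff_seq_limit.mp hmem
  -- For each approximant, find a unit vector killed by the first n-1 functionals.
  have key : ∀ t : ℕ, ∃ u : Fin n → ℂ, ‖u‖ = 1 ∧
      mrankLE (fun j k => ∑ i, S t i j k * u i) (r - (n-1)) := by
    intro t
    obtain ⟨f, v, w, hS'⟩ := hS t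
    set fN : ℕ → Fin n → ℂ := fun s => if h : s < r then f ⟨s, h⟩ else 0 with hfN
    set vN : ℕ → Fin p → ℂ := fun s => if h : s < r then v ⟨s, h⟩ else 0 with hvN
    set wN : ℕ → Fin m → ℂ := fun s => if h : s < r then w ⟨s, h⟩ else 0 with hwN
    set K : Matrix (Fin (n-1)) (Fin n) ℂ := Matrix.of (fun s i => fN (s : ℕ) i) with hK
    have hker : ∃ u : Fin n → ℂ, u ≠ 0 ∧ K.mulVec u = 0 := by
      by_contra h
      push_neg at h
      have hinj : Function.Injective K.mulVecLin := by
        rw [← LinearMap.ker_eq_bot, LinearMap.ker_eq_bot']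
        intro u hu
        by_contra hu0
        exact (h u hu0) hu
      have hle := LinearMap.finrank_le_finrank_of_injective hinj
      rw [Module.finrank_fin_fun, Module.finrank_fin_fun] at hle
      omega
    obtain ⟨u, hu0, huk⟩ := hker
    set c : ℂ := (‖u‖ : ℂ)⁻¹ with hc
    set u1 : Fin n → ℂ := c • u with hu1def
    have hcnorm : ‖u1‖ = 1 := by
      rw [hu1def, norm_smul, hc]
      rw [norm_inv, Complex.norm_real, Real.norm_eq_abs, abs_of_nonneg (norm_nonneg u)]
      exact inv_mul_cancel₀ (norm_ne_zero_iff.mpr hu0)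
    have hker' : ∀ s : ℕ, s < n - 1 → (∑ i, fN s i * u1 i) = 0 := by
      intro s hs
      have h0 := congrFun huk ⟨s, hs⟩
      simp only [Matrix.mulVec, dotProduct, Pi.zero_apply, hK, Matrix.of_apply] at h0
      have : (∑ i, fN s i * u1 i) = c * ∑ i, fN s i * u i := by
        rw [Finset.mul_sum]
        exact Finset.sum_congr rfl fun i _ => by
          simp only [hu1def, Pi.smul_apply, smul_eq_mul]; ring
      rw [this, h0, mul_zero]
    refine ⟨u1, hcnorm, ?_⟩
    refine ⟨fun q j => (∑ i, fN ((n-1) + (q : ℕ)) i * u1 i) * vN ((n-1) + (q : ℕ)) j,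
      fun q k => wN ((n-1) + (q : ℕ)) k, ?_⟩
    funext j k
    set g : ℕ → ℂ := fun s => (∑ i, fN s i * u1 i) * vN s j * wN s k with hg
    have step1 : (∑ i, S t i j k * u1 i) = ∑ s : Fin r, (∑ i, f s i * u1 i) * v s j * w s k := by
      rw [hS']
      have : ∀ i, (∑ s : Fin r, f s i * v s j * w s k) * u1 i
          = ∑ s : Fin r, f s i * v s j * w s k * u1 i := fun i => Finset.sum_mul _ _ _
      simp_rw [this]
      rw [Finset.sum_comm]
      refine Finset.sum_congr rfl fun s _ => ?_
      rw [Finset.sum_mul, Finset.sum_mul]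
      exact Finset.sum_congr rfl fun i _ => by ring
    have step2 : (∑ s : Fin r, (∑ i, f s i * u1 i) * v s j * w s k)
        = ∑ s ∈ Finset.range r, g s := by
      rw [← Fin.sum_univ_eq_sum_range g r]
      refine Finset.sum_congr rfl fun s _ => ?_
      simp only [hg, hfN, hvN, hwN, dif_pos s.isLt, Fin.eta]
    have step3 : (∑ s ∈ Finset.range r, g s) = ∑ s ∈ Finset.Ico (n-1) r, g s := by
      refine (Finset.sum_subset ?_ ?_).symm
      · intro x hx
        rw [Finset.mem_Ico] at hx
        exact Finset.mem_range.mpr hx.2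
      · intro x hx hx'
        rw [Finset.mem_range] at hx
        rw [Finset.mem_Ico] at hx'
        push_neg at hx'
        have hxlt : x < n - 1 := by omega
        rw [hg]
        simp only []
        rw [hker' x hxlt, zero_mul, zero_mul]
    have step4 : (∑ s ∈ Finset.Ico (n-1) r, g s)
        = ∑ q ∈ Finset.range (r - (n-1)), g ((n-1) + q) :=
      Finset.sum_Ico_eq_sum_range g (n-1) r
    have step5 : (∑ q ∈ Finset.range (r - (n-1)), g ((n-1) + q))
        = ∑ q : Fin (r - (n-1)), g ((n-1) + (q : ℕ)) :=
      (Fin.sum_univ_eq_sum_range (fun q => g ((n-1) + q)) (r - (n-1))).symm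
    rw [step1, step2, step3, step4, step5]
  choose u hu1 hu2 using key
  have hcpt : IsCompact (Metric.sphere (0 : Fin n → ℂ) 1) := isCompact_sphere 0 1
  have husphere : ∀ t, u t ∈ Metric.sphere (0 : Fin n → ℂ) 1 := fun t =>
    mem_sphere_zero_iff_norm.mpr (hu1 t)
  obtain ⟨u₀, hu₀, φ, hφ, hulim⟩ := hcpt.tendsto_subseq husphere
  have hu₀ne : u₀ ≠ 0 := by
    intro h
    rw [h] at hu₀
    simp at hu₀
  have hScomp : Filter.Tendsto (fun t => S (φ t)) Filter.atTop (nhds T) :=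
    hSlim.comp hφ.tendsto_atTop
  have hSe : ∀ i j k, Filter.Tendsto (fun t => S (φ t) i j k) Filter.atTop (nhds (T i j k)) :=
    fun i j k => tendsto_pi_nhds.mp (tendsto_pi_nhds.mp (tendsto_pi_nhds.mp hScomp i) j) k
  have hue : ∀ i, Filter.Tendsto (fun t => u (φ t) i) Filter.atTop (nhds (u₀ i)) :=
    fun i => tendsto_pi_nhds.mp hulim i
  have hTu : Filter.Tendsto (fun t => fun j k => ∑ i, S (φ t) i j k * u (φ t) i)
      Filter.atTop (nhds (fun j k => ∑ i, T i j k * u₀ i)) := by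
    refine tendsto_pi_nhds.mpr fun j => tendsto_pi_nhds.mpr fun k => ?_
    exact tendsto_finset_sum _ fun i _ => (hSe i j k).mul (hue i)
  have hmem2 : mrankLE (fun j k => ∑ i, T i j k * u₀ i) (r - (n-1)) :=
    (isClosed_mrankLE p m (r - (n-1))).mem_of_tendsto hTu
      (Filter.Eventually.of_forall fun t => hu2 (φ t))
  rcases le_or_gt (n-1) r with hnr | hnr
  · have h1 : mrank (fun j k => ∑ i, T i j k * u₀ i) ≤ r - (n-1) := Nat.sInf_le hmem2
    have hmemset : mrank (fun j k => ∑ i, T i j k * u₀ i) ∈ {r' | ∃ u' : Fin n → ℂ, u' ≠ 0 ∧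
        r' = mrank (fun j k => ∑ i, T i j k * u' i)} := by
      rw [Set.mem_setOf_eq]
      exact ⟨u₀, hu₀ne, rfl⟩
    have h2 := Nat.sInf_le hmemset
    calc n - 1 + sInf {r' | ∃ u' : Fin n → ℂ, u' ≠ 0 ∧
          r' = mrank (fun j k => ∑ i, T i j k * u' i)}
        ≤ n - 1 + (r - (n-1)) := Nat.add_le_add_left (le_trans h2 h1) _
      _ = r := Nat.add_sub_cancel' hnr
  · exfalso
    rw [Nat.sub_eq_zero_of_le (le_of_lt hnr)] at hmem2
    obtain ⟨v, w, hM⟩ := hmem2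
    have hzero : (fun j k => ∑ i, T i j k * u₀ i)
        = (fun j k => ∑ i, T i j k * (0 : Fin n → ℂ) i) := by
      funext j k
      rw [congrFun (congrFun hM j) k]
      simp
    exact hu₀ne (hT hzero)
end
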